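/- Let a, b ∈ ℚ with a ≠ 0 and let α be an algebraic integer of degree d over ℚ with complex conjugates β₁, …, β_d (under a fixed embedding of ℚ̄ into ℂ). Then h(aα + b) ≤ (1/d) Σ_{i=1}^d log⁺| β_i + b/a | + Δ(a,b). -/

import Mathlib

noncomputable section

/-- The field of algebraic numbers, `ℚ̄`. -/
abbrev Qbar : Type := AlgebraicClosure ℚ

/-- `log⁺ x = max (log x) 0` (for `x ≥ 0`). -/
def logPlus (x : ℝ) : ℝ := Real.log (max 1 x)

/-- The absolute Weil height, via the Mahler-measure formula
`h(α) = (1/d) (log a_d + ∑_i log⁺ |α_i|)`, where `a_d` is the (positive) leading coefficient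
of the primitive integer minimal polynomial of `α` and the `α_i` are the conjugates of `α`
in `ℂ`. -/
def weilHeight (α : Qbar) : ℝ :=
  ((minpoly ℚ α).natDegree : ℝ)⁻¹ *
    (Real.log (sInf {n : ℕ | 0 < n ∧ ∀ i, (((minpoly ℚ α).coeff i) * (n : ℚ)).den = 1} : ℕ) +
     (((minpoly ℚ α).aroots ℂ).map (fun z => logPlus (‖z‖))).sum)

/-- The essential minimum of a real-valued function:
`μ^ess(f) = inf {θ : {α | f α ≤ θ} is infinite}`. -/
def essMin {X : Type} (f : X → ℝ) : ℝ :=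
  sInf {θ : ℝ | {α : X | f α ≤ θ}.Infinite}

/-- The height `h_{a,b}(α) = h(α) + h(aα + b)`. -/
def hab (a b : Qbar) (α : Qbar) : ℝ := weilHeight α + weilHeight (a * α + b)

/-- `Δ(a,b) = ∑_p log⁺ max (|a|_p, |b|_p) + log⁺ |a|` for rationals `a, b`. -/
def Delta (a b : ℚ) : ℝ :=
  (∑ᶠ p ∈ {p : ℕ | p.Prime}, logPlus ((max (padicNorm p a) (padicNorm p b) : ℚ) : ℝ))
  + logPlus |(a : ℝ)|

open Polynomial

/-- affine transform of a polynomial: monic version of `p((X-e)/c)`. -/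
def gaff (c e : ℚ) (p : ℚ[X]) : ℚ[X] := C (c ^ p.natDegree) * p.comp (C c⁻¹ * (X - C e))

lemma lin_natDegree {c e : ℚ} (hc : c ≠ 0) : (C c⁻¹ * (X - C e)).natDegree = 1 := by
  rw [natDegree_C_mul (inv_ne_zero hc), natDegree_X_sub_C]

lemma gaff_natDegree {c e : ℚ} (hc : c ≠ 0) (p : ℚ[X]) (hp : p ≠ 0) :
    (gaff c e p).natDegree = p.natDegree := by
  rw [gaff, natDegree_C_mul (pow_ne_zero _ hc), natDegree_comp, lin_natDegree hc, mul_one]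

lemma gaff_monic {c e : ℚ} (hc : c ≠ 0) {p : ℚ[X]} (hp : p.Monic) (hd : p.natDegree ≠ 0) :
    (gaff c e p).Monic := by
  have h1 : (C c⁻¹ * (X - C e)).natDegree = 1 := lin_natDegree hc
  have hlc : (C c⁻¹ * (X - C e)).leadingCoeff = c⁻¹ := by
    rw [leadingCoeff_mul, leadingCoeff_C, (monic_X_sub_C e).leadingCoeff, mul_one]
  unfold gaff Monic
  rw [leadingCoeff_mul, leadingCoeff_C, leadingCoeff_comp (by rw [h1]; exact one_ne_zero),
    hp.leadingCoeff, hlc, one_mul, ← mul_pow, mul_inv_cancel₀ hc, one_pow]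

lemma gaff_ne_zero {c e : ℚ} (hc : c ≠ 0) {p : ℚ[X]} (hp : p.Monic) (hd : p.natDegree ≠ 0) :
    gaff c e p ≠ 0 := (gaff_monic hc hp hd).ne_zero

lemma gaff_aeval {c e : ℚ} (hc : c ≠ 0) {p : ℚ[X]} (x : Qbar) (hx : aeval x p = 0) :
    aeval ((c : Qbar) * x + (e : Qbar)) (gaff c e p) = 0 := by
  rw [gaff, map_mul, aeval_comp]
  have : aeval ((c : Qbar) * x + (e : Qbar)) (C c⁻¹ * (X - C e)) = x := by
    simp only [map_mul, aeval_C, map_sub, aeval_X]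
    have hcQ : (c : Qbar) ≠ 0 := by exact_mod_cast hc
    push_cast
    field_simp
    rw [eq_ratCast, add_sub_cancel_right]
    exact mul_div_cancel_left₀ x (by exact_mod_cast hc)
  rw [this, hx, mul_zero]

lemma natDegree_minpoly_aff_le {c e : ℚ} (hc : c ≠ 0) (x : Qbar) :
    (minpoly ℚ ((c : Qbar) * x + (e : Qbar))).natDegree ≤ (minpoly ℚ x).natDegree := by
  have hx : IsIntegral ℚ x := ((AlgebraicClosure.isAlgebraic ℚ).isAlgebraic x).isIntegral
  have hm : (minpoly ℚ x).Monic := minpoly.monic hx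
  have hd : (minpoly ℚ x).natDegree ≠ 0 := (minpoly.natDegree_pos hx).ne'
  have := minpoly.degree_le_of_ne_zero ℚ ((c : Qbar) * x + (e : Qbar))
    (gaff_ne_zero hc hm hd) (gaff_aeval hc x (minpoly.aeval ℚ x))
  have h2 := natDegree_le_natDegree this
  rwa [gaff_natDegree hc _ hm.ne_zero] at h2

lemma natDegree_minpoly_aff {c e : ℚ} (hc : c ≠ 0) (x : Qbar) :
    (minpoly ℚ ((c : Qbar) * x + (e : Qbar))).natDegree = (minpoly ℚ x).natDegree := by
  refine le_antisymm (natDegree_minpoly_aff_le hc x) ?_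
  have hcQ : (c : Qbar) ≠ 0 := by exact_mod_cast hc
  have hxeq : x = ((c⁻¹ : ℚ) : Qbar) * ((c : Qbar) * x + (e : Qbar)) + ((-(e/c) : ℚ) : Qbar) := by
    push_cast
    field_simp
    ring
  calc (minpoly ℚ x).natDegree
      = (minpoly ℚ (((c⁻¹ : ℚ) : Qbar) * ((c : Qbar) * x + (e : Qbar)) + ((-(e/c) : ℚ) : Qbar))).natDegree := by rw [← hxeq]
    _ ≤ _ := natDegree_minpoly_aff_le (inv_ne_zero hc) _

lemma minpoly_aff {c e : ℚ} (hc : c ≠ 0) (x : Qbar) :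
    minpoly ℚ ((c : Qbar) * x + (e : Qbar)) = gaff c e (minpoly ℚ x) := by
  have hx : IsIntegral ℚ x := ((AlgebraicClosure.isAlgebraic ℚ).isAlgebraic x).isIntegral
  have hy : IsIntegral ℚ ((c : Qbar) * x + (e : Qbar)) :=
    (((AlgebraicClosure.isAlgebraic ℚ).isAlgebraic _).isIntegral)
  have hm : (minpoly ℚ x).Monic := minpoly.monic hx
  have hd : (minpoly ℚ x).natDegree ≠ 0 := (minpoly.natDegree_pos hx).ne'
  refine (Polynomial.eq_of_monic_of_dvd_of_natDegree_le (minpoly.monic hy)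
    (gaff_monic hc hm hd) (minpoly.dvd ℚ _ (gaff_aeval hc x (minpoly.aeval ℚ x))) ?_).symm
  rw [gaff_natDegree hc _ hm.ne_zero, natDegree_minpoly_aff hc x]

lemma aroots_gaff {c e : ℚ} (hc : c ≠ 0) {p : ℚ[X]} (hm : p.Monic) (hd : p.natDegree ≠ 0) :
    (gaff c e p).aroots ℂ = (p.aroots ℂ).map (fun z => (c : ℂ) * z + (e : ℂ)) := by
  have hcC : (c : ℂ) ≠ 0 := by exact_mod_cast hc
  set q : ℂ[X] := p.map (algebraMap ℚ ℂ) with hq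
  have hqm : q.Monic := hm.map _
  have hqsplit : q = (q.roots.map fun r => X - C r).prod :=
    (IsAlgClosed.splits q).eq_prod_roots_of_monic hqm
  have hcard : q.roots.card = p.natDegree := by
    rw [(splits_iff_card_roots).mp (IsAlgClosed.splits q), hq,
      (hm.natDegree_map _)]
  have hmap : (gaff c e p).map (algebraMap ℚ ℂ) =
      C ((c : ℂ) ^ p.natDegree) * q.comp (C (c : ℂ)⁻¹ * (X - C (e : ℂ))) := by
    rw [gaff, Polynomial.map_mul, map_C, Polynomial.map_comp, Polynomial.map_mul, map_C,
      Polynomial.map_sub, map_X, map_C]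
    simp only [eq_ratCast, Rat.cast_inv, Rat.cast_pow]
    rfl
  have hkey : ∀ r : ℂ, (X - C r).comp (C (c : ℂ)⁻¹ * (X - C (e : ℂ)))
      = C (c : ℂ)⁻¹ * (X - C ((c : ℂ) * r + (e : ℂ))) := by
    intro r
    rw [sub_comp, X_comp, C_comp]
    rw [mul_sub, mul_sub, ← C_mul]
    rw [sub_sub, ← C_mul, ← C_add]
    congr 1
    field_simp
    ring
  rw [aroots_def, hmap]
  conv_lhs => rw [hqsplit]
  rw [multiset_prod_comp, Multiset.map_map]
  simp only [Function.comp, hkey]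
  rw [show (fun r => C (c:ℂ)⁻¹ * (X - C ((c:ℂ) * r + (e:ℂ)))) =
    (fun r => C (c:ℂ)⁻¹ * (X - C r)) ∘ (fun r => (c:ℂ) * r + (e:ℂ)) from rfl]
  rw [← Multiset.map_map, Multiset.prod_map_mul, Multiset.map_const', Multiset.prod_replicate,
    Multiset.card_map, hcard, ← mul_assoc, ← C_pow, ← C_mul, ← mul_pow,
    mul_inv_cancel₀ hcC, one_pow, C_1, one_mul, roots_multiset_prod_X_sub_C,
    aroots_def]

lemma logPlus_nonneg (x : ℝ) : 0 ≤ logPlus x :=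
  Real.log_nonneg (le_max_left _ _)

lemma logPlus_mono {x y : ℝ} (h : x ≤ y) : logPlus x ≤ logPlus y :=
  Real.log_le_log (lt_of_lt_of_le one_pos (le_max_left _ _)) (max_le_max le_rfl h)

lemma logPlus_mul {x y : ℝ} (hx : 0 ≤ x) (hy : 0 ≤ y) :
    logPlus (x * y) ≤ logPlus x + logPlus y := by
  have h1 : (1:ℝ) ≤ max 1 x * max 1 y := by
    nlinarith [le_max_left 1 x, le_max_left 1 y]
  have h2 : x * y ≤ max 1 x * max 1 y :=
    mul_le_mul (le_max_right 1 x) (le_max_right 1 y) hy (le_trans zero_le_one (le_max_left 1 x))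
  have hxpos : (0:ℝ) < max 1 x := lt_of_lt_of_le one_pos (le_max_left _ _)
  have hypos : (0:ℝ) < max 1 y := lt_of_lt_of_le one_pos (le_max_left _ _)
  calc logPlus (x*y) ≤ Real.log (max 1 x * max 1 y) :=
        Real.log_le_log (lt_of_lt_of_le one_pos (le_max_left _ _)) (max_le h1 h2)
    _ = logPlus x + logPlus y := Real.log_mul hxpos.ne' hypos.ne'

lemma gaff_scaled (t : ℚ) {a b : ℚ} (ha : a ≠ 0) (f : ℚ[X]) :
    C (t ^ f.natDegree) * gaff a b f =
      ∑ i ∈ Finset.range (f.natDegree + 1),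
        C (f.coeff i * (t * a) ^ (f.natDegree - i)) * (C t * X - C (t * b)) ^ i := by
  have hcomp : f.comp (C a⁻¹ * (X - C b)) =
      ∑ i ∈ Finset.range (f.natDegree + 1), C (f.coeff i) * (C a⁻¹ * (X - C b)) ^ i := by
    rw [comp_eq_sum_left]
    exact sum_over_range f fun n => by rw [map_zero, zero_mul]
  rw [gaff, hcomp, Finset.mul_sum, Finset.mul_sum]
  refine Finset.sum_congr rfl fun i hi => ?_
  have hi' : i ≤ f.natDegree := Nat.lt_succ_iff.mp (Finset.mem_range.mp hi)
  have hlin : C t * X - C (t * b) = C (t * a) * (C a⁻¹ * (X - C b)) := by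
    rw [← mul_assoc, ← C_mul, mul_assoc t, mul_inv_cancel₀ ha, mul_one, mul_sub, ← C_mul]
  rw [hlin]
  simp only [mul_pow, ← C_pow, ← C_mul, ← mul_assoc]
  congr 2
  have ht : t ^ (f.natDegree - i) * t ^ i = t ^ f.natDegree := by
    rw [← pow_add, Nat.sub_add_cancel hi']
  have ha2 : a ^ (f.natDegree - i) * a ^ i = a ^ f.natDegree := by
    rw [← pow_add, Nat.sub_add_cancel hi']
  have hre : f.coeff i * t ^ (f.natDegree - i) * a ^ (f.natDegree - i) * t ^ i * a ^ i * a⁻¹ ^ i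
      = (t ^ (f.natDegree - i) * t ^ i) * ((a ^ (f.natDegree - i) * a ^ i) * (f.coeff i * a⁻¹ ^ i)) := by
    ring
  rw [hre, ht, ha2]
  ring

lemma gaff_den {a b : ℚ} (ha : a ≠ 0) (F : ℤ[X]) (j : ℕ) :
    ((gaff a b (F.map (Int.castRingHom ℚ))).coeff j *
      (((Nat.lcm a.den b.den) ^ (F.map (Int.castRingHom ℚ)).natDegree : ℕ) : ℚ)).den = 1 := by
  set f : ℚ[X] := F.map (Int.castRingHom ℚ) with hf
  set d : ℕ := f.natDegree with hd
  set L : ℕ := Nat.lcm a.den b.den with hL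
  have haden : a.den ∣ L := Nat.dvd_lcm_left _ _
  have hbden : b.den ∣ L := Nat.dvd_lcm_right _ _
  set A : ℤ := a.num * ((L / a.den : ℕ) : ℤ) with hA
  set B : ℤ := b.num * ((L / b.den : ℕ) : ℤ) with hB
  clear_value A B
  have hdvd_cast : ∀ (q : ℚ), q.den ∣ L → ((q.num * ((L / q.den : ℕ) : ℤ) : ℤ) : ℚ) = (L : ℚ) * q := by
    intro q hq
    rw [Int.cast_mul, Int.cast_natCast, Nat.cast_div hq (by exact_mod_cast q.den_nz),
      mul_div_assoc', mul_comm ((q.num:ℚ)) ((L:ℚ)), mul_div_assoc, Rat.num_div_den]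
  have hAq : ((A : ℤ) : ℚ) = (L : ℚ) * a := by rw [hA]; exact hdvd_cast a haden
  have hBq : ((B : ℤ) : ℚ) = (L : ℚ) * b := by rw [hB]; exact hdvd_cast b hbden
  set G : ℤ[X] := ∑ i ∈ Finset.range (d + 1),
      C (F.coeff i * A ^ (d - i)) * (C (L : ℤ) * X - C B) ^ i with hG
  have hmapG : G.map (Int.castRingHom ℚ) = C ((L : ℚ) ^ d) * gaff a b f := by
    rw [hG, Polynomial.map_sum, gaff_scaled ((L : ℕ) : ℚ) ha f, ← hd]
    refine Finset.sum_congr rfl fun i _ => ?_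
    rw [Polynomial.map_mul, map_C, Polynomial.map_pow, Polynomial.map_sub, Polynomial.map_mul,
      map_C, map_C, map_X]
    rw [coeff_map]
    simp only [eq_intCast, Int.cast_mul, Int.cast_pow, Int.cast_natCast, hAq, hBq, mul_pow]
  have hcoeff : (gaff a b f).coeff j * ((L ^ d : ℕ) : ℚ) = ((G.coeff j : ℤ) : ℚ) := by
    have := congrArg (fun p => Polynomial.coeff p j) hmapG
    simp only [coeff_map, coeff_C_mul, eq_intCast] at this
    push_cast [this]
    ring
  rw [hcoeff]
  exact Rat.den_intCast _

lemma den_fact_le {p : ℕ} (hp : p.Prime) (q : ℚ) :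
    (q.den.factorization p : ℝ) * Real.log p ≤ logPlus ((padicNorm p q : ℚ) : ℝ) := by
  haveI : Fact p.Prime := ⟨hp⟩
  rcases eq_or_ne (q.den.factorization p) 0 with h | h
  · rw [h]
    simpa using logPlus_nonneg _
  · have hq : q ≠ 0 := by
      rintro rfl
      simp [Rat.den_zero] at h
    have hdvd : p ∣ q.den := Nat.dvd_of_factorization_pos h
    have hnum : ¬ (p ∣ q.num.natAbs) := fun hc =>
      hp.not_dvd_one (q.reduced ▸ Nat.dvd_gcd hc hdvd)
    have hvint : padicValInt p q.num = 0 := by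
      rw [padicValInt, padicValNat.eq_zero_of_not_dvd hnum]
    have hvden : padicValNat p q.den = q.den.factorization p := (Nat.factorization_def q.den hp).symm
    have hval : padicValRat p q = -(q.den.factorization p : ℤ) := by
      rw [padicValRat, hvint, hvden, Nat.cast_zero, zero_sub]
    have hnorm : padicNorm p q = (p : ℚ) ^ (q.den.factorization p : ℕ) := by
      rw [padicNorm.eq_zpow_of_nonzero hq, hval, neg_neg, zpow_natCast]
    rw [hnorm]
    have hcast : (((p : ℚ) ^ (q.den.factorization p : ℕ) : ℚ) : ℝ) =
        (p : ℝ) ^ (q.den.factorization p : ℕ) := by push_cast; ring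
    rw [hcast, logPlus, max_eq_right (one_le_pow₀ (by exact_mod_cast hp.one_le)), Real.log_pow]

lemma padic_le_one {p : ℕ} (hp : p.Prime) {q : ℚ} (h : ¬ p ∣ q.den) : padicNorm p q ≤ 1 := by
  haveI : Fact p.Prime := ⟨hp⟩
  rcases eq_or_ne q 0 with rfl | hq
  · simp [padicNorm.zero]
  · rw [padicNorm.eq_zpow_of_nonzero hq]
    refine zpow_le_one_of_nonpos₀ (by exact_mod_cast hp.one_le) ?_
    rw [neg_nonpos, padicValRat, padicValNat.eq_zero_of_not_dvd h]
    simp [padicValInt]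

lemma log_lcm_le (a b : ℚ) :
    Real.log (Nat.lcm a.den b.den) ≤
      ∑ᶠ p ∈ {p : ℕ | p.Prime}, logPlus ((max (padicNorm p a) (padicNorm p b) : ℚ) : ℝ) := by
  set φ : ℕ → ℝ := fun p => logPlus ((max (padicNorm p a) (padicNorm p b) : ℚ) : ℝ) with hφ
  set L : ℕ := Nat.lcm a.den b.den with hL
  have hL0 : L ≠ 0 := Nat.lcm_ne_zero a.den_nz b.den_nz
  have hd0 : a.den * b.den ≠ 0 := Nat.mul_ne_zero a.den_nz b.den_nz
  -- the finsum equals the sum over prime factors of a.den * b.den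
  have hsupp : {p : ℕ | p.Prime} ∩ Function.support φ
      = ↑((a.den * b.den).primeFactors) ∩ Function.support φ := by
    ext p
    simp only [Set.mem_inter_iff, Set.mem_setOf_eq, Finset.coe_sort_coe, Finset.mem_coe,
      Nat.mem_primeFactors, Function.mem_support]
    constructor
    · rintro ⟨hp, hne⟩
      refine ⟨⟨hp, ?_, hd0⟩, hne⟩
      by_contra hnd
      have hna : ¬ p ∣ a.den := fun hc => hnd (hc.mul_right _)
      have hnb : ¬ p ∣ b.den := fun hc => hnd (hc.mul_left _)
      apply hne
      have hmax : (max (padicNorm p a) (padicNorm p b) : ℚ) ≤ 1 :=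
        max_le (padic_le_one hp hna) (padic_le_one hp hnb)
      rw [hφ]
      simp only [logPlus]
      rw [max_eq_left (by exact_mod_cast hmax), Real.log_one]
    · rintro ⟨⟨hp, _, _⟩, hne⟩
      exact ⟨hp, hne⟩
  rw [finsum_mem_eq_sum_of_inter_support_eq φ hsupp]
  have hsub : L.primeFactors ⊆ (a.den * b.den).primeFactors :=
    Nat.primeFactors_mono (Nat.lcm_dvd_mul _ _) hd0
  have hstep : Real.log L ≤ ∑ p ∈ L.primeFactors, φ p := by
    have h1 : L = ∏ p ∈ L.primeFactors, p ^ L.factorization p := by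
      conv_lhs => rw [← Nat.factorization_prod_pow_eq_self hL0]
      rw [Finsupp.prod, Nat.support_factorization]
    have hfact : (L : ℝ) = ∏ p ∈ L.primeFactors, (p : ℝ) ^ (L.factorization p) := by
      exact_mod_cast congrArg (Nat.cast : ℕ → ℝ) h1
    rw [hfact, Real.log_prod (fun p hp =>
      pow_ne_zero _ (by exact_mod_cast (Nat.prime_of_mem_primeFactors hp).pos.ne'))]
    refine Finset.sum_le_sum fun p hpmem => ?_
    have hp : p.Prime := Nat.prime_of_mem_primeFactors hpmem
    rw [Real.log_pow]
    have hmax : L.factorization p = max (a.den.factorization p) (b.den.factorization p) := by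
      rw [hL, Nat.factorization_lcm a.den_nz b.den_nz]
      rfl
    rcases max_cases (a.den.factorization p) (b.den.factorization p) with ⟨heq, _⟩ | ⟨heq, _⟩
    · calc ((L.factorization p : ℝ)) * Real.log p
          = (a.den.factorization p : ℝ) * Real.log p := by rw [hmax, heq]
        _ ≤ logPlus ((padicNorm p a : ℚ) : ℝ) := den_fact_le hp a
        _ ≤ φ p := logPlus_mono (by exact_mod_cast le_max_left (padicNorm p a) (padicNorm p b))
    · calc ((L.factorization p : ℝ)) * Real.log p
          = (b.den.factorization p : ℝ) * Real.log p := by rw [hmax, heq]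
        _ ≤ logPlus ((padicNorm p b : ℚ) : ℝ) := den_fact_le hp b
        _ ≤ φ p := logPlus_mono (by exact_mod_cast le_max_right (padicNorm p a) (padicNorm p b))
  refine hstep.trans (Finset.sum_le_sum_of_subset_of_nonneg hsub fun p _ _ => logPlus_nonneg _)

/-- For `a, b ∈ ℚ`, `a ≠ 0` and an algebraic integer `α` of degree `d` with complex
conjugates `β₁, …, β_d` (the roots in `ℂ` of its minimal polynomial),
`h(aα + b) ≤ (1/d) ∑_i log⁺ |β_i + b/a| + Δ(a,b)`. -/
theorem height_linear_le (a b : ℚ) (ha : a ≠ 0) (α : Qbar) (hα : IsIntegral ℤ α) :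
    weilHeight ((a : Qbar) * α + (b : Qbar)) ≤
      ((minpoly ℚ α).natDegree : ℝ)⁻¹ *
        (((minpoly ℚ α).aroots ℂ).map
          (fun β => logPlus (‖β + ((b / a : ℚ) : ℂ)‖))).sum
      + Delta a b := by
  have hαQ : IsIntegral ℚ α := hα.tower_top
  set f : ℚ[X] := minpoly ℚ α with hf
  set d : ℕ := f.natDegree with hdd
  have hm : f.Monic := minpoly.monic hαQ
  have hd0 : 0 < d := minpoly.natDegree_pos hαQ
  set γ : Qbar := (a : Qbar) * α + (b : Qbar) with hγ
  have hmin : minpoly ℚ γ = gaff a b f := minpoly_aff ha α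
  have hdeg : (minpoly ℚ γ).natDegree = d := natDegree_minpoly_aff ha α
  have hFf : f = (minpoly ℤ α).map (Int.castRingHom ℚ) := by
    rw [hf, minpoly.isIntegrallyClosed_eq_field_fractions' ℚ hα]
    rfl
  set L : ℕ := Nat.lcm a.den b.den with hL
  have hLpos : 0 < L := Nat.pos_of_ne_zero (Nat.lcm_ne_zero a.den_nz b.den_nz)
  set S : Set ℕ := {n : ℕ | 0 < n ∧ ∀ i, (((minpoly ℚ γ).coeff i) * (n : ℚ)).den = 1} with hS
  have hmem : L ^ d ∈ S := by
    constructor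
    · exact pow_pos hLpos d
    · intro i
      rw [hmin]
      have := gaff_den (a := a) (b := b) ha (minpoly ℤ α) i
      rw [← hFf, ← hdd, ← hL] at this
      exact this
  set N : ℕ := sInf S with hN
  have hNle : N ≤ L ^ d := Nat.sInf_le hmem
  have hNpos : 0 < N := (Nat.sInf_mem (⟨L ^ d, hmem⟩ : S.Nonempty)).1
  have hlogN : Real.log N ≤ (d : ℝ) * Real.log L := by
    calc Real.log N ≤ Real.log ((L : ℝ) ^ d) := by
          refine Real.log_le_log (by exact_mod_cast hNpos) ?_
          exact_mod_cast hNle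
      _ = (d : ℝ) * Real.log L := by rw [Real.log_pow]
  have hlogL : Real.log L ≤
      ∑ᶠ p ∈ {p : ℕ | p.Prime}, logPlus ((max (padicNorm p a) (padicNorm p b) : ℚ) : ℝ) :=
    log_lcm_le a b
  set F : ℝ := ∑ᶠ p ∈ {p : ℕ | p.Prime}, logPlus ((max (padicNorm p a) (padicNorm p b) : ℚ) : ℝ)
    with hFdef
  have hlogN2 : Real.log N ≤ (d : ℝ) * F :=
    hlogN.trans (mul_le_mul_of_nonneg_left hlogL (by positivity))
  have hroots : (minpoly ℚ γ).aroots ℂ = (f.aroots ℂ).map (fun z => (a : ℂ) * z + (b : ℂ)) := by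
    rw [hmin]
    exact aroots_gaff ha hm hd0.ne'
  have hcard : Multiset.card (f.aroots ℂ) = d := by
    rw [aroots_def, splits_iff_card_roots.mp (IsAlgClosed.splits _),
      hm.natDegree_map]
  have haC : (a : ℂ) ≠ 0 := by exact_mod_cast ha
  have habs : ‖((a : ℚ) : ℂ)‖ = |(a : ℝ)| := by
    rw [Complex.norm_ratCast]
  have hptwise : ∀ z : ℂ, logPlus (‖(a : ℂ) * z + (b : ℂ)‖) ≤
      logPlus (‖z + ((b / a : ℚ) : ℂ)‖) + logPlus |(a : ℝ)| := by
    intro z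
    have heq : (a : ℂ) * z + (b : ℂ) = (a : ℂ) * (z + ((b / a : ℚ) : ℂ)) := by
      push_cast
      field_simp
    rw [heq, norm_mul, habs]
    calc logPlus (|(a : ℝ)| * ‖z + ((b / a : ℚ) : ℂ)‖)
        ≤ logPlus |(a : ℝ)| + logPlus (‖z + ((b / a : ℚ) : ℂ)‖) :=
          logPlus_mul (abs_nonneg _) (norm_nonneg _)
      _ = _ := add_comm _ _
  have hsum : (((minpoly ℚ γ).aroots ℂ).map (fun z => logPlus (‖z‖))).sum ≤
      ((f.aroots ℂ).map (fun β => logPlus (‖β + ((b / a : ℚ) : ℂ)‖))).sum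
        + (d : ℝ) * logPlus |(a : ℝ)| := by
    rw [hroots, Multiset.map_map]
    calc ((f.aroots ℂ).map ((fun z => logPlus (‖z‖)) ∘ fun z => (a:ℂ)*z + (b:ℂ))).sum
        ≤ ((f.aroots ℂ).map (fun z =>
            logPlus (‖z + ((b / a : ℚ) : ℂ)‖) + logPlus |(a : ℝ)|)).sum := by
          exact Multiset.sum_map_le_sum_map _ _ fun z _ => hptwise z
      _ = _ := by
          rw [Multiset.sum_map_add, Multiset.map_const', Multiset.sum_replicate, hcard,
            nsmul_eq_mul]
  -- final assembly
  rw [weilHeight]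
  rw [hdeg]
  have hgoal : ((d : ℝ))⁻¹ * (Real.log N + (((minpoly ℚ γ).aroots ℂ).map
      (fun z => logPlus (‖z‖))).sum) ≤
      (d : ℝ)⁻¹ * (((f.aroots ℂ).map
        (fun β => logPlus (‖β + ((b / a : ℚ) : ℂ)‖))).sum) + Delta a b := by
    have hd' : (0:ℝ) < (d : ℝ) := by exact_mod_cast hd0
    have h1 : Real.log N + (((minpoly ℚ γ).aroots ℂ).map
        (fun z => logPlus (‖z‖))).sum ≤
        (d : ℝ) * F + (((f.aroots ℂ).map
          (fun β => logPlus (‖β + ((b / a : ℚ) : ℂ)‖))).sum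
          + (d : ℝ) * logPlus |(a : ℝ)|) := add_le_add hlogN2 hsum
    have h2 := mul_le_mul_of_nonneg_left h1 (inv_nonneg.mpr hd'.le)
    refine h2.trans (le_of_eq ?_)
    rw [Delta, ← hFdef]
    field_simp
    ring
  exact hgoal

end
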